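/- Let p > 2 be prime, r > 1 with r ≡ 1 (mod p-1), and t_1 a real number with t_1 ≤ t + 2 where t = v_p(r-1). Then in Z_p[x,y], the sum over μ ∈ F_p of ([μ]px + y)^r is congruent to p·y^r modulo p^{t+2}·Z_p[x,y] (hence modulo p^{t_1}). -/

import Mathlib

open MvPolynomial

/-- `k + 2 ≤ 3^k` for `k ≥ 1`. -/
lemma aux_three_pow (k : ℕ) (hk : 1 ≤ k) : k + 2 ≤ 3 ^ k := by
  induction k with
  | zero => omega
  | succ m ih =>
    rcases Nat.eq_zero_or_pos m with hm | hm
    · subst hm; norm_num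
    · have := ih hm
      have : 3 ^ (m + 1) = 3 * 3 ^ m := by ring
      omega

/-- For an odd prime `p` and `n ≥ 2`,
`v_p(n) + v_p(n-1) + 2 ≤ n`. -/
lemma aux_fact_le (p : ℕ) (hp : p.Prime) (hp3 : 2 < p) (n : ℕ) (hn : 2 ≤ n) :
    n.factorization p + (n - 1).factorization p + 2 ≤ n := by
  set a := n.factorization p with ha
  set b := (n - 1).factorization p with hb
  have hn0 : n ≠ 0 := by omega
  have hn1 : n - 1 ≠ 0 := by omega
  have hdn : p ^ a ∣ n := Nat.ordProj_dvd n p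
  have hdn1 : p ^ b ∣ n - 1 := Nat.ordProj_dvd (n - 1) p
  rcases Nat.eq_zero_or_pos a with ha0 | hapos
  · rcases Nat.eq_zero_or_pos b with hb0 | hbpos
    · omega
    · have hpb : 3 ^ b ≤ n - 1 := by
        calc 3 ^ b ≤ p ^ b := Nat.pow_le_pow_left (by omega) b
        _ ≤ n - 1 := Nat.le_of_dvd (by omega) hdn1
      have := aux_three_pow b hbpos
      omega
  · -- a ≥ 1, then p ∣ n so p ∤ n - 1, hence b = 0
    have hpn : p ∣ n := dvd_trans (dvd_pow_self p (by omega)) hdn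
    have hb0 : b = 0 := by
      by_contra h
      have hpn1 : p ∣ n - 1 := dvd_trans (dvd_pow_self p h) hdn1
      have hpn1' : p ∣ n - (n - 1) := Nat.dvd_sub hpn hpn1
      have hone : n - (n - 1) = 1 := by omega
      rw [hone] at hpn1'
      exact absurd (Nat.le_of_dvd one_pos hpn1') (by omega)
    have hpa : 3 ^ a ≤ n := by
      calc 3 ^ a ≤ p ^ a := Nat.pow_le_pow_left (by omega) a
      _ ≤ n := Nat.le_of_dvd (by omega) hdn
    have := aux_three_pow a hapos
    omega

/-- Core valuation estimate: for `p` an odd prime, `1 < r`, `t = v_p(r-1)` and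
`2 ≤ n`, we have `p^(t+2) ∣ p^n * C(r,n)`. -/
lemma aux_choose_dvd (p : ℕ) (hp : p.Prime) (hp3 : 2 < p) (r : ℕ) (hr : 1 < r)
    (t : ℕ) (ht : t = padicValNat p (r - 1)) (n : ℕ) (hn : 2 ≤ n) :
    p ^ (t + 2) ∣ p ^ n * r.choose n := by
  rcases le_or_gt n r with hnr | hnr
  swap
  · rw [Nat.choose_eq_zero_of_lt hnr, mul_zero]; exact dvd_zero _
  obtain ⟨n₂, rfl⟩ : ∃ n₂, n = n₂ + 2 := ⟨n - 2, by omega⟩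
  obtain ⟨r₂, rfl⟩ : ∃ r₂, r = r₂ + 2 := ⟨r - 2, by omega⟩
  have key : (r₂ + 2).choose (n₂ + 2) * ((n₂ + 2) * (n₂ + 1))
      = ((r₂ + 2) * (r₂ + 1)) * r₂.choose n₂ := by
    have h1 := Nat.add_one_mul_choose_eq (r₂ + 1) (n₂ + 1)
    have h2 := Nat.add_one_mul_choose_eq r₂ n₂
    try simp only [Nat.succ_eq_add_one] at h1 h2
    calc (r₂ + 2).choose (n₂ + 2) * ((n₂ + 2) * (n₂ + 1))
        = ((r₂ + 2).choose (n₂ + 2) * (n₂ + 2)) * (n₂ + 1) := by ring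
      _ = ((r₂ + 2) * (r₂ + 1).choose (n₂ + 1)) * (n₂ + 1) := by rw [← h1]
      _ = (r₂ + 2) * ((r₂ + 1).choose (n₂ + 1) * (n₂ + 1)) := by ring
      _ = (r₂ + 2) * ((r₂ + 1) * r₂.choose n₂) := by rw [← h2]
      _ = ((r₂ + 2) * (r₂ + 1)) * r₂.choose n₂ := by ring
  have hc0 : (r₂ + 2).choose (n₂ + 2) ≠ 0 := (Nat.choose_pos hnr).ne'
  have hc20 : r₂.choose n₂ ≠ 0 := (Nat.choose_pos (by omega)).ne'
  have hn2 : (n₂ + 2 : ℕ) ≠ 0 := by omega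
  have hn1 : (n₂ + 1 : ℕ) ≠ 0 := by omega
  have hr2 : (r₂ + 2 : ℕ) ≠ 0 := by omega
  have hr1 : (r₂ + 1 : ℕ) ≠ 0 := by omega
  have e1 := congrArg (fun m : ℕ => m.factorization p) key
  simp only [Nat.factorization_mul hc0 (mul_ne_zero hn2 hn1),
    Nat.factorization_mul hn2 hn1,
    Nat.factorization_mul (mul_ne_zero hr2 hr1) hc20,
    Nat.factorization_mul hr2 hr1,
    Finsupp.add_apply] at e1
  have ht' : t = (r₂ + 1).factorization p := by
    have e2 : (r₂ + 2 : ℕ) - 1 = r₂ + 1 := by omega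
    rw [ht, e2, Nat.factorization_def _ hp]
  have hb := aux_fact_le p hp hp3 (n₂ + 2) (by omega)
  have hb' : (n₂ + 2 : ℕ) - 1 = n₂ + 1 := by omega
  rw [hb'] at hb
  -- conclude: t + 2 ≤ (n₂+2) + v_p(choose)
  have hfc : t + 2 ≤ (n₂ + 2) + ((r₂ + 2).choose (n₂ + 2)).factorization p := by omega
  calc p ^ (t + 2) ∣ p ^ ((n₂ + 2) + ((r₂ + 2).choose (n₂ + 2)).factorization p) :=
        pow_dvd_pow p hfc
    _ = p ^ (n₂ + 2) * p ^ (((r₂ + 2).choose (n₂ + 2)).factorization p) := pow_add p _ _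
    _ ∣ p ^ (n₂ + 2) * (r₂ + 2).choose (n₂ + 2) :=
        mul_dvd_mul_left _ (Nat.ordProj_dvd _ p)

/-- Uniqueness of roots of `X^p - X` in `ℤ_p` within a residue class. -/
lemma teich_uniq (p : ℕ) [hp : Fact p.Prime] (a b : ℤ_[p]) (ha : a ^ p = a)
    (hb : b ^ p = b) (hab : (p : ℤ_[p]) ∣ a - b) : a = b := by
  have key := geom_sum₂_mul a b p
  rw [ha, hb] at key
  set G := ∑ i ∈ Finset.range p, a ^ i * b ^ (p - 1 - i) with hG
  have hsum : ∑ i ∈ Finset.range p, a ^ i * a ^ (p - 1 - i) = (p : ℤ_[p]) * a ^ (p - 1) := by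
    rw [Finset.sum_congr rfl (fun i hi => ?_), Finset.sum_const, Finset.card_range,
      nsmul_eq_mul]
    rw [← pow_add]
    congr 1
    have := Finset.mem_range.mp hi
    have := hp.out.two_le
    omega
  have hpG : (p : ℤ_[p]) ∣ G := by
    have h1 : (p : ℤ_[p]) ∣ G - (p : ℤ_[p]) * a ^ (p - 1) := by
      have hrew : G - (p : ℤ_[p]) * a ^ (p - 1)
          = ∑ i ∈ Finset.range p, a ^ i * (b ^ (p - 1 - i) - a ^ (p - 1 - i)) := by
        rw [← hsum, hG, ← Finset.sum_sub_distrib]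
        exact Finset.sum_congr rfl fun i _ => by ring
      rw [hrew]
      refine Finset.dvd_sum fun i _ => Dvd.dvd.mul_left ?_ _
      exact dvd_trans (dvd_sub_comm.mp hab) (sub_dvd_pow_sub_pow b a _)
    have h2 : (p : ℤ_[p]) ∣ (p : ℤ_[p]) * a ^ (p - 1) := dvd_mul_right _ _
    simpa using dvd_add h1 h2
  have hzero : (G - 1) * (a - b) = 0 := by rw [sub_mul, key, one_mul, sub_self]
  rcases mul_eq_zero.mp hzero with h | h
  · exfalso
    rw [sub_eq_zero.mp h] at hpG
    have h2 := map_dvd (PadicInt.toZMod (p := p)) hpG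
    simp only [map_natCast, map_one, ZMod.natCast_self] at h2
    haveI : Fact (1 < p) := ⟨hp.out.one_lt⟩
    exact one_ne_zero (zero_dvd_iff.mp h2)
  · exact sub_eq_zero.mp h

lemma teich_ker (p : ℕ) [Fact p.Prime] (x : ℤ_[p]) (hx : PadicInt.toZMod x = 0) :
    (p : ℤ_[p]) ∣ x := by
  have hmem : x ∈ RingHom.ker (PadicInt.toZMod (p := p)) := hx
  rwa [PadicInt.ker_toZMod, PadicInt.maximalIdeal_eq_span_p,
    Ideal.mem_span_singleton] at hmem

/-- The sum of all Teichmüller lifts vanishes (for odd `p`). -/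
lemma teich_sum_zero (p : ℕ) [hp : Fact p.Prime] (hp3 : 2 < p)
    (T : ZMod p → ℤ_[p]) (hT1 : ∀ μ, T μ ^ p = T μ)
    (hT2 : ∀ μ, PadicInt.toZMod (T μ) = μ) : ∑ μ : ZMod p, T μ = 0 := by
  have hodd : Odd p := hp.out.odd_of_ne_two (by omega)
  have hneg : ∀ μ, T (-μ) = -T μ := by
    intro μ
    refine teich_uniq p _ _ (hT1 _) (by rw [hodd.neg_pow, hT1]) (teich_ker p _ ?_)
    rw [map_sub, hT2, map_neg, hT2, sub_self]
  have hre : ∑ μ : ZMod p, T μ = ∑ μ : ZMod p, T (-μ) :=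
    Fintype.sum_equiv (Equiv.neg (ZMod p)) _ _ fun μ => by
      rw [Equiv.neg_apply, neg_neg]
  have hS : ∑ μ : ZMod p, T μ = -∑ μ : ZMod p, T μ := by
    have hcongr : ∑ μ : ZMod p, T (-μ) = ∑ μ : ZMod p, -T μ :=
      Finset.sum_congr rfl fun μ _ => hneg μ
    calc (∑ μ : ZMod p, T μ) = ∑ μ : ZMod p, T (-μ) := hre
      _ = ∑ μ : ZMod p, -T μ := hcongr
      _ = -∑ μ : ZMod p, T μ := Finset.sum_neg_distrib _
  have h2 : (2 : ℤ_[p]) * ∑ μ : ZMod p, T μ = 0 := by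
    rw [two_mul]
    exact add_eq_zero_iff_eq_neg.mpr hS
  rcases mul_eq_zero.mp h2 with h | h
  · exact absurd h two_ne_zero
  · exact h

/-- In ℤ_p[x,y], Σ_{μ ∈ F_p} ([μ]px + y)^r ≡ p·y^r (mod p^{t+2}), where
    t = v_p(r-1), r > 1, r ≡ 1 (mod p-1); in particular the congruence holds
    modulo p^{t₁} for any t₁ ≤ t + 2. -/
theorem stmt_17 (p : ℕ) [Fact p.Prime] (hp : 2 < p) (r : ℕ) (hr : 1 < r)
    (hcong : (p - 1) ∣ (r - 1)) (t : ℕ) (ht : t = padicValNat p (r - 1))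
    (T : ZMod p → ℤ_[p]) (hT1 : ∀ μ, T μ ^ p = T μ)
    (hT2 : ∀ μ, PadicInt.toZMod (T μ) = μ) :
    let x : MvPolynomial (Fin 2) ℤ_[p] := X 0
    let y : MvPolynomial (Fin 2) ℤ_[p] := X 1
    ∃ D : MvPolynomial (Fin 2) ℤ_[p],
      (∑ μ : ZMod p, (C (T μ) * (p : MvPolynomial (Fin 2) ℤ_[p]) * x + y) ^ r)
        - (p : MvPolynomial (Fin 2) ℤ_[p]) * y ^ r
      = (p : MvPolynomial (Fin 2) ℤ_[p]) ^ (t + 2) * D := by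
  intro x y
  classical
  set s : ℕ → ℤ_[p] := fun n => ∑ μ : ZMod p, T μ ^ n with hs
  have hC : (p : MvPolynomial (Fin 2) ℤ_[p]) = C ((p : ℤ_[p])) :=
    (map_natCast (C : ℤ_[p] →+* MvPolynomial (Fin 2) ℤ_[p]) p).symm
  have expand : ∀ μ : ZMod p,
      (C (T μ) * (p : MvPolynomial (Fin 2) ℤ_[p]) * x + y) ^ r
        = ∑ n ∈ Finset.range (r + 1),
            C (T μ ^ n * (p : ℤ_[p]) ^ n * ((r.choose n : ℕ) : ℤ_[p])) * (x ^ n * y ^ (r - n)) := by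
    intro μ
    rw [add_pow]
    refine Finset.sum_congr rfl fun n _ => ?_
    rw [hC, (map_natCast (C : ℤ_[p] →+* MvPolynomial (Fin 2) ℤ_[p]) (r.choose n)).symm]
    simp only [map_mul, map_pow, mul_pow]
    ring
  have main : (∑ μ : ZMod p, (C (T μ) * (p : MvPolynomial (Fin 2) ℤ_[p]) * x + y) ^ r)
      = ∑ n ∈ Finset.range (r + 1),
          C (s n * (p : ℤ_[p]) ^ n * ((r.choose n : ℕ) : ℤ_[p])) * (x ^ n * y ^ (r - n)) := by
    calc (∑ μ : ZMod p, (C (T μ) * (p : MvPolynomial (Fin 2) ℤ_[p]) * x + y) ^ r)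
        = ∑ μ : ZMod p, ∑ n ∈ Finset.range (r + 1),
            C (T μ ^ n * (p : ℤ_[p]) ^ n * ((r.choose n : ℕ) : ℤ_[p])) * (x ^ n * y ^ (r - n)) :=
          Finset.sum_congr rfl fun μ _ => expand μ
      _ = ∑ n ∈ Finset.range (r + 1), ∑ μ : ZMod p,
            C (T μ ^ n * (p : ℤ_[p]) ^ n * ((r.choose n : ℕ) : ℤ_[p])) * (x ^ n * y ^ (r - n)) :=
          Finset.sum_comm
      _ = ∑ n ∈ Finset.range (r + 1),
            C (s n * (p : ℤ_[p]) ^ n * ((r.choose n : ℕ) : ℤ_[p])) * (x ^ n * y ^ (r - n)) := by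
          refine Finset.sum_congr rfl fun n _ => ?_
          rw [← Finset.sum_mul]
          congr 1
          rw [← map_sum]
          congr 1
          rw [← Finset.sum_mul, ← Finset.sum_mul]
  have hs0 : s 0 = (p : ℤ_[p]) := by
    simp [hs, Finset.card_univ, ZMod.card]
  have hs1 : s 1 = 0 := by
    simpa [hs] using teich_sum_zero p hp T hT1 hT2
  rw [main, Finset.sum_range_succ']
  have hf0 : C (s 0 * (p : ℤ_[p]) ^ 0 * ((r.choose 0 : ℕ) : ℤ_[p])) * (x ^ 0 * y ^ (r - 0))
      = (p : MvPolynomial (Fin 2) ℤ_[p]) * y ^ r := by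
    rw [hs0, hC]
    simp
  rw [hf0, add_sub_cancel_right]
  have hdvd : (p : MvPolynomial (Fin 2) ℤ_[p]) ^ (t + 2) ∣
      ∑ i ∈ Finset.range r,
        C (s (i + 1) * (p : ℤ_[p]) ^ (i + 1) * ((r.choose (i + 1) : ℕ) : ℤ_[p]))
          * (x ^ (i + 1) * y ^ (r - (i + 1))) := by
    refine Finset.dvd_sum fun i _ => ?_
    have hCp : (p : MvPolynomial (Fin 2) ℤ_[p]) ^ (t + 2) = C ((p : ℤ_[p]) ^ (t + 2)) := by
      rw [hC, map_pow]
    rw [hCp]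
    refine Dvd.dvd.mul_right (map_dvd C ?_) _
    rcases Nat.eq_zero_or_pos i with h0 | hpos
    · subst h0
      simp [hs1]
    · have hnat := aux_choose_dvd p Fact.out hp r hr t ht (i + 1) (by omega)
      have hcast : ((p : ℤ_[p]) ^ (t + 2)) ∣ ((p : ℤ_[p]) ^ (i + 1) * ((r.choose (i + 1) : ℕ) : ℤ_[p])) := by
        have h := Nat.cast_dvd_cast (α := ℤ_[p]) hnat
        push_cast at h
        exact h
      rw [mul_assoc]
      exact Dvd.dvd.mul_left hcast _
  obtain ⟨D, hD⟩ := hdvd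
  exact ⟨D, hD⟩
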